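/- Let A be a commutative ring and I ⊆ A a quasiregular ideal, i.e., I/I² is a flat A/I-module and the cotangent complex L_{(A/I)/A} is equivalent to (I/I²)[1]. Then the canonical map of graded rings Sym*_{A/I}(I/I²) → ⊕ₙ Iⁿ/Iⁿ⁺¹ is an isomorphism. -/

import Mathlib

open Finsupp

namespace QRAux

variable {A : Type*} [CommRing A] {r : ℕ}

/-- The monomial `∏ j, f j ^ e j`. -/
def mon (f : Fin r → A) (e : Fin r → ℕ) : A := ∏ j, f j ^ e j

lemma mon_add (f : Fin r → A) (d e : Fin r → ℕ) : mon f (d + e) = mon f d * mon f e := by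
  simp [mon, pow_add, Finset.prod_mul_distrib]

lemma mon_single (f : Fin r → A) (j : Fin r) : mon f (Pi.single j 1) = f j := by
  rw [mon, Finset.prod_eq_single j]
  · simp
  · intro j' _ hj'; rw [Pi.single_eq_of_ne hj', pow_zero]
  · simp

lemma sub_add_single {e : Fin r → ℕ} {j : Fin r} (h : e j ≠ 0) :
    (e - Pi.single j 1) + Pi.single j 1 = e := by
  funext j'
  by_cases hj : j' = j
  · subst hj
    simp only [Pi.add_apply, Pi.sub_apply, Pi.single_eq_same]
    omega
  · simp [Pi.single_eq_of_ne hj]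

lemma mon_eq_mul {f : Fin r → A} {e : Fin r → ℕ} {j : Fin r} (h : e j ≠ 0) :
    mon f e = f j * mon f (e - Pi.single j 1) := by
  conv_lhs => rw [← sub_add_single h]
  rw [mon_add, mon_single, mul_comm]

lemma sum_single_one (j : Fin r) : ∑ j', (Pi.single j 1 : Fin r → ℕ) j' = 1 := by
  simp [Finset.sum_pi_single']

lemma sum_sub_single {e : Fin r → ℕ} {j : Fin r} (h : e j ≠ 0) :
    (∑ j' : Fin r, (e - Pi.single j 1 : Fin r → ℕ) j') + 1 = ∑ j' : Fin r, e j' := by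
  conv_rhs => rw [← sub_add_single h]
  simp [Pi.add_apply, Finset.sum_add_distrib, sum_single_one]

/-- Homogeneity of degree `n` for a coefficient function. -/
def Homog (n : ℕ) (c : (Fin r → ℕ) →₀ A) : Prop := ∀ e, c e ≠ 0 → ∑ j, e j = n

/-- Evaluation of a coefficient function against monomials. -/
noncomputable def ev (f : Fin r → A) : ((Fin r → ℕ) →₀ A) →ₗ[A] A :=
  Finsupp.linearCombination A (mon f)

lemma ev_apply (f : Fin r → A) (c : (Fin r → ℕ) →₀ A) :
    ev f c = c.sum fun e a => a • mon f e := Finsupp.linearCombination_apply _ _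

lemma ev_mapDomain {ι : Type*} (f : Fin r → A) (h : ι → (Fin r → ℕ)) (c : ι →₀ A) :
    ev f (mapDomain h c) = c.sum fun e a => a * mon f (h e) := by
  rw [ev_apply]
  refine (Finsupp.sum_mapDomain_index (fun b => zero_smul A (mon f b))
    (fun b m₁ m₂ => add_smul m₁ m₂ (mon f b))).trans ?_
  simp only [smul_eq_mul]

/-- The ideal of elements representable as homogeneous degree-`n` combinations with
coefficients in `J`. -/
def HRep (f : Fin r → A) (n : ℕ) (J : Ideal A) : Ideal A where
  carrier := {x | ∃ c, Homog n c ∧ (∀ e, c e ∈ J) ∧ ev f c = x}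
  add_mem' := by
    rintro x y ⟨c, hc, hcJ, rfl⟩ ⟨c', hc', hc'J, rfl⟩
    refine ⟨c + c', fun e he => ?_, fun e => ?_, by rw [map_add]⟩
    · rw [Finsupp.add_apply] at he
      rcases (by by_contra h; push_neg at h; simp [h.1, h.2] at he : c e ≠ 0 ∨ c' e ≠ 0) with h | h
      · exact hc e h
      · exact hc' e h
    · rw [Finsupp.add_apply]; exact add_mem (hcJ e) (hc'J e)
  zero_mem' := ⟨0, fun e he => absurd rfl he, fun e => zero_mem _, map_zero _⟩
  smul_mem' := by
    rintro a x ⟨c, hc, hcJ, rfl⟩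
    refine ⟨a • c, fun e he => ?_, fun e => ?_, by rw [map_smul]⟩
    · rw [Finsupp.smul_apply] at he
      exact hc e fun h => he (by rw [h, smul_zero])
    · rw [Finsupp.smul_apply, smul_eq_mul]; exact Ideal.mul_mem_left _ _ (hcJ e)

lemma mem_HRep {f : Fin r → A} {n : ℕ} {J : Ideal A} {x : A} :
    x ∈ HRep f n J ↔ ∃ c, Homog n c ∧ (∀ e, c e ∈ J) ∧ ev f c = x := Iff.rfl

lemma mon_mem_pow {f : Fin r → A} {I : Ideal A} (hf : ∀ j, f j ∈ I) (e : Fin r → ℕ) :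
    mon f e ∈ I ^ (∑ j, e j) := by
  have : ∀ s : Finset (Fin r), (∏ j ∈ s, f j ^ e j) ∈ I ^ (∑ j ∈ s, e j) := by
    intro s
    induction s using Finset.induction with
    | empty => simp [Ideal.one_eq_top]
    | insert _ _ h ih =>
      rw [Finset.prod_insert h, Finset.sum_insert h, pow_add]
      exact Ideal.mul_mem_mul (Ideal.pow_mem_pow (hf _) _) ih
  exact this Finset.univ

lemma HRep_le_mul {f : Fin r → A} {n : ℕ} {J : Ideal A} :
    HRep f n J ≤ J * (Ideal.span (Set.range f)) ^ n := by
  rintro x ⟨c, hc, hcJ, rfl⟩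
  rw [ev_apply]
  refine Submodule.sum_mem _ fun e he => ?_
  show c e • mon f e ∈ _
  rw [smul_eq_mul]
  exact Ideal.mul_mem_mul (hcJ e)
    (hc e (Finsupp.mem_support_iff.mp he) ▸
      mon_mem_pow (fun j => Ideal.subset_span (Set.mem_range_self j)) e)

lemma HRep_top_le {f : Fin r → A} {n : ℕ} :
    HRep f n ⊤ ≤ (Ideal.span (Set.range f)) ^ n := by
  refine le_trans HRep_le_mul ?_
  rw [Ideal.top_mul]

lemma pow_le_HRep {f : Fin r → A} {n : ℕ} :
    (Ideal.span (Set.range f)) ^ n ≤ HRep f n ⊤ := by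
  induction n with
  | zero =>
    intro x _
    refine ⟨Finsupp.single 0 x, fun e he => ?_, fun e => trivial, ?_⟩
    · rcases eq_or_ne e 0 with rfl | h
      · simp
      · rw [Finsupp.single_eq_of_ne' (Ne.symm h)] at he; exact absurd rfl he
    · rw [ev, Finsupp.linearCombination_single, smul_eq_mul]
      simp [mon]
  | succ n ih =>
    rw [pow_succ]
    refine Submodule.mul_le.mpr fun m hm i hi => ?_
    obtain ⟨c, hc, -, rfl⟩ := ih hm
    obtain ⟨a, rfl⟩ := (Submodule.mem_span_range_iff_exists_fun (R := A)).mp hi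
    rw [Finset.mul_sum]
    refine Submodule.sum_mem _ fun j _ => ?_
    have : ev f c * (a j • f j) = a j • (f j * ev f c) := by
      rw [smul_eq_mul, smul_eq_mul]; ring
    rw [this]
    refine Ideal.mul_mem_left _ _ ?_
    refine ⟨mapDomain (· + Pi.single j 1) c, fun e he => ?_, fun e => trivial, ?_⟩
    · have hsupp := Finsupp.mapDomain_support (f := (· + Pi.single j 1)) (s := c)
      have hmem := Finsupp.mem_support_iff.mpr he
      obtain ⟨d, hd, rfl⟩ := Finset.mem_image.mp (hsupp hmem)
      simp only [Pi.add_apply]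
      rw [Finset.sum_add_distrib, sum_single_one, hc d (Finsupp.mem_support_iff.mp hd)]
    · rw [ev_mapDomain]
      rw [ev_apply, Finsupp.mul_sum]
      refine Finsupp.sum_congr fun e _ => ?_
      rw [mon_add, mon_single, smul_eq_mul]
      ring

lemma shift_le {f : Fin r → A} {n : ℕ} :
    HRep f (n + 1) ⊤ ≤ HRep f n (Ideal.span (Set.range f)) := by
  rintro x ⟨c, hc, -, rfl⟩
  rw [ev_apply]
  refine Submodule.sum_mem _ fun e he => ?_
  have hd : ∑ j, e j = n + 1 := hc e (Finsupp.mem_support_iff.mp he)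
  have : ∃ j, e j ≠ 0 := by
    by_contra h
    push_neg at h
    simp [funext h] at hd
  obtain ⟨j, hj⟩ := this
  refine ⟨Finsupp.single (e - Pi.single j 1) (c e * f j), fun e' he' => ?_, fun e' => ?_, ?_⟩
  · rcases eq_or_ne e' (e - Pi.single j 1) with rfl | h
    · have := sum_sub_single (e := e) hj
      omega
    · rw [Finsupp.single_eq_of_ne' (Ne.symm h)] at he'; exact absurd rfl he'
  · rw [Finsupp.single_apply]
    split
    · exact Ideal.mul_mem_left _ _ (Ideal.subset_span ⟨j, rfl⟩)
    · exact zero_mem _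
  · show ev f _ = c e • mon f e
    rw [ev, Finsupp.linearCombination_single, smul_eq_mul, smul_eq_mul]
    rw [mon_eq_mul (f := f) hj]
    ring

lemma homog_zero {f : Fin r → A} {c : (Fin r → ℕ) →₀ A} (hc : Homog 0 c) (h0 : ev f c = 0) :
    c = 0 := by
  have hsub : c.support ⊆ {0} := by
    intro e he
    rw [Finset.mem_singleton]
    have h1 := hc e (Finsupp.mem_support_iff.mp he)
    funext j
    simpa using (Finset.sum_eq_zero_iff.mp h1) j (Finset.mem_univ j)
  have hc0 : c = Finsupp.single 0 (c 0) := Finsupp.support_subset_singleton.mp hsub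
  rw [hc0, ev, Finsupp.linearCombination_single] at h0
  have hm : mon f 0 = 1 := by simp [mon]
  rw [hm, smul_eq_mul, mul_one] at h0
  rw [hc0, h0, Finsupp.single_zero]

lemma Rlem (f : Fin r → A)
    (hQ : ∀ n (c : (Fin r → ℕ) →₀ A), Homog n c → ev f c = 0 →
      ∀ e, c e ∈ Ideal.span (Set.range f)) :
    ∀ n (c : (Fin r → ℕ) →₀ A), Homog n c →
      ev f c ∈ (Ideal.span (Set.range f)) ^ (n + 1) →
      ∀ e, c e ∈ Ideal.span (Set.range f) := by
  intro n c hc hev e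
  obtain ⟨c', hc', hc'I, hev'⟩ := shift_le (pow_le_HRep hev)
  have h0 : ev f (c - c') = 0 := by rw [map_sub, hev', sub_self]
  have hhom : Homog n (c - c') := by
    intro e' he'
    rw [Finsupp.sub_apply] at he'
    by_cases h1 : c e' = 0
    · have h2 : c' e' ≠ 0 := fun h => he' (by rw [h1, h, sub_zero])
      exact hc' e' h2
    · exact hc e' h1
  have h1 := hQ n (c - c') hhom h0 e
  have h2 : c e = (c - c') e + c' e := by rw [Finsupp.sub_apply]; ring
  rw [h2]
  exact add_mem h1 (hc'I e)

lemma Slem (f : Fin r → A)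
    (hQ : ∀ n (c : (Fin r → ℕ) →₀ A), Homog n c → ev f c = 0 →
      ∀ e, c e ∈ Ideal.span (Set.range f)) {g : A}
    (hg : ∀ a, g * a ∈ Ideal.span (Set.range f) → a ∈ Ideal.span (Set.range f)) :
    ∀ n a, g * a ∈ (Ideal.span (Set.range f)) ^ n → a ∈ (Ideal.span (Set.range f)) ^ n := by
  intro n
  induction n with
  | zero => intro a _; simp
  | succ n ih =>
    intro a ha
    have ha' : a ∈ (Ideal.span (Set.range f)) ^ n :=
      ih a (Ideal.pow_le_pow_right (Nat.le_succ n) ha)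
    obtain ⟨c, hcH, -, rfl⟩ := pow_le_HRep ha'
    have hgc : ev f (g • c) ∈ (Ideal.span (Set.range f)) ^ (n + 1) := by
      rw [map_smul, smul_eq_mul]; exact ha
    have hsm : Homog n (g • c) := by
      intro e he
      apply hcH
      intro h
      exact he (by rw [Finsupp.smul_apply, h, smul_zero])
    have hco := Rlem f hQ n (g • c) hsm hgc
    have hcI : ∀ e, c e ∈ Ideal.span (Set.range f) := by
      intro e
      apply hg
      have := hco e
      rwa [Finsupp.smul_apply, smul_eq_mul] at this
    have hm : ev f c ∈ Ideal.span (Set.range f) * (Ideal.span (Set.range f)) ^ n :=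
      HRep_le_mul ⟨c, hcH, hcI, rfl⟩
    rwa [← pow_succ'] at hm

lemma mon_castSucc {f : Fin (r + 1) → A} {e : Fin (r + 1) → ℕ} (h : e (Fin.last r) = 0) :
    mon f e = mon (fun j => f j.castSucc) (fun j => e j.castSucc) := by
  rw [mon, Fin.prod_univ_castSucc, h, pow_zero, mul_one]; rfl

lemma mon_snoc (f : Fin (r + 1) → A) (d : Fin r → ℕ) :
    mon f (Fin.snoc d 0) = mon (fun j => f j.castSucc) d := by
  rw [mon, Fin.prod_univ_castSucc]
  simp [mon]

lemma sum_castSucc_eq {e : Fin (r + 1) → ℕ} (h : e (Fin.last r) = 0) :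
    ∑ j : Fin r, e j.castSucc = ∑ j, e j := by
  rw [Fin.sum_univ_castSucc, h, add_zero]

lemma sum_snoc (d : Fin r → ℕ) :
    ∑ j, (Fin.snoc d 0 : Fin (r + 1) → ℕ) j = ∑ j, d j := by
  rw [Fin.sum_univ_castSucc]
  simp

lemma smul_top_eq (J : Ideal A) : (J • ⊤ : Submodule A A) = J := by
  rw [Ideal.smul_eq_mul, Ideal.mul_top]

lemma reg_of_quot {J : Ideal A} {g : A}
    (h : IsSMulRegular (A ⧸ (J • ⊤ : Submodule A A)) g) :
    ∀ a, g * a ∈ J → a ∈ J := by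
  intro a ha
  have h1 : g • (Submodule.Quotient.mk a : A ⧸ (J • ⊤ : Submodule A A)) = g • 0 := by
    rw [smul_zero, ← Submodule.Quotient.mk_smul, Submodule.Quotient.mk_eq_zero, smul_top_eq]
    simpa using ha
  have h2 := h h1
  have h3 := (Submodule.Quotient.mk_eq_zero _).mp h2
  rwa [smul_top_eq] at h3

lemma snoc_zero_injective :
    Function.Injective (fun d : Fin r → ℕ => (Fin.snoc d 0 : Fin (r + 1) → ℕ)) := by
  intro x y hxy
  have h := congrArg Fin.init hxy
  rwa [Fin.init_snoc, Fin.init_snoc] at h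

lemma emb_ev (f : Fin (r + 1) → A) (Q : (Fin r → ℕ) →₀ A) :
    ev f (mapDomain (fun d : Fin r → ℕ => (Fin.snoc d 0 : Fin (r + 1) → ℕ)) Q) =
      ev (fun j => f j.castSucc) Q := by
  rw [ev_mapDomain, ev_apply]
  refine Finsupp.sum_congr fun d _ => ?_
  rw [mon_snoc, smul_eq_mul]

lemma emb_hom {Q : (Fin r → ℕ) →₀ A} {m : ℕ} (hQ : Homog m Q) :
    Homog m (mapDomain (fun d : Fin r → ℕ => (Fin.snoc d 0 : Fin (r + 1) → ℕ)) Q) := by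
  classical
  intro e he
  obtain ⟨d, hd, rfl⟩ := Finset.mem_image.mp
    (Finsupp.mapDomain_support (Finsupp.mem_support_iff.mpr he))
  rw [sum_snoc]
  exact hQ d (Finsupp.mem_support_iff.mp hd)

lemma emb_mem {Q : (Fin r → ℕ) →₀ A} {J : Ideal A} (h : ∀ d, Q d ∈ J) :
    ∀ e, (mapDomain (fun d : Fin r → ℕ => (Fin.snoc d 0 : Fin (r + 1) → ℕ)) Q) e ∈ J := by
  intro e
  by_cases he : e ∈ Set.range (fun d : Fin r → ℕ => (Fin.snoc d 0 : Fin (r + 1) → ℕ))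
  · obtain ⟨d, rfl⟩ := he
    rw [Finsupp.mapDomain_apply snoc_zero_injective]
    exact h d
  · rw [Finsupp.mapDomain_notin_range _ _ he]
    exact zero_mem _

theorem core : ∀ {r : ℕ} (f : Fin r → A),
    RingTheory.Sequence.IsWeaklyRegular A (List.ofFn f) →
    ∀ n (c : (Fin r → ℕ) →₀ A), Homog n c → ev f c = 0 →
      ∀ e, c e ∈ Ideal.span (Set.range f) := by
  intro r
  induction r with
  | zero =>
    intro f _ n c hc hev e
    rcases Nat.eq_zero_or_pos n with rfl | hn
    · simp [homog_zero hc hev]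
    · have h0 : c e = 0 := by
        by_contra h
        have := hc e h
        simp at this
        omega
      rw [h0]; exact zero_mem _
  | succ r ih =>
    intro f hf
    classical
    set f' : Fin r → A := fun j => f j.castSucc with hf'def
    set g := f (Fin.last r) with hgdef
    have hsplit : List.ofFn f = List.ofFn f' ++ [g] := by
      rw [List.ofFn_succ', List.concat_eq_append]
    rw [hsplit, RingTheory.Sequence.isWeaklyRegular_append_iff] at hf
    obtain ⟨hf1, hf2⟩ := hf
    rw [RingTheory.Sequence.isWeaklyRegular_singleton_iff] at hf2
    have hofList : Ideal.ofList (List.ofFn f') = Ideal.span (Set.range f') := by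
      show Ideal.span _ = _
      congr 1
      ext x
      simp [List.mem_ofFn]
    rw [hofList] at hf2
    have hg0 : ∀ a, g * a ∈ Ideal.span (Set.range f') → a ∈ Ideal.span (Set.range f') :=
      reg_of_quot hf2
    have hQ' := ih f' hf1
    have hS := Slem f' hQ' hg0
    have hI'le : Ideal.span (Set.range f') ≤ Ideal.span (Set.range f) :=
      Ideal.span_mono (by rintro _ ⟨j, rfl⟩; exact ⟨j.castSucc, rfl⟩)
    have hgI : g ∈ Ideal.span (Set.range f) := Ideal.subset_span ⟨Fin.last r, rfl⟩
    intro n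
    induction n with
    | zero =>
      intro c hc hev e
      simp [homog_zero hc hev]
    | succ n ihn =>
      intro c hc hev e₀
      set c₀ := c.filter (fun e => e (Fin.last r) = 0) with hc₀def
      set c₁ := c.filter (fun e => ¬ e (Fin.last r) = 0) with hc₁def
      have hcsum : c₀ + c₁ = c := Finsupp.filter_pos_add_filter_neg c _
      have hc₀app : ∀ e, c₀ e = if e (Fin.last r) = 0 then c e else 0 := fun e => rfl
      have hc₁app : ∀ e, c₁ e = if ¬ e (Fin.last r) = 0 then c e else 0 := fun e => rfl
      have hc₁supp : ∀ e ∈ c₁.support, ¬ e (Fin.last r) = 0 := by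
        intro e he
        have h1 := Finsupp.mem_support_iff.mp he
        by_contra h
        rw [hc₁app e, if_neg (not_not_intro h)] at h1
        exact h1 rfl
      have hc₁suppc : c₁.support ⊆ c.support := by
        rw [hc₁def, Finsupp.support_filter]
        exact Finset.filter_subset _ _
      have hc₀suppc : c₀.support ⊆ c.support := by
        rw [hc₀def, Finsupp.support_filter]
        exact Finset.filter_subset _ _
      have hinj₁ : Set.InjOn (fun e : Fin (r + 1) → ℕ => e - Pi.single (Fin.last r) 1)
          {e : Fin (r + 1) → ℕ | ¬ e (Fin.last r) = 0} := by
        intro x hx y hy hxy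
        dsimp only at hxy
        calc x = (x - Pi.single (Fin.last r) 1) + Pi.single (Fin.last r) 1 :=
              (sub_add_single hx).symm
          _ = (y - Pi.single (Fin.last r) 1) + Pi.single (Fin.last r) 1 := by rw [hxy]
          _ = y := sub_add_single hy
      set cH := Finsupp.mapDomain (fun e : Fin (r + 1) → ℕ => e - Pi.single (Fin.last r) 1) c₁
        with hcHdef
      have hcHapp : ∀ e : Fin (r + 1) → ℕ, ¬ e (Fin.last r) = 0 →
          cH (e - Pi.single (Fin.last r) 1) = c₁ e := by
        intro e he
        exact Finsupp.mapDomain_apply' {e : Fin (r + 1) → ℕ | ¬ e (Fin.last r) = 0} c₁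
          (fun x hx => hc₁supp x hx) hinj₁ he
      have hev₁ : ev f c₁ = g * ev f cH := by
        rw [hcHdef, ev_mapDomain, ev_apply, Finsupp.mul_sum]
        refine Finsupp.sum_congr fun e he => ?_
        rw [smul_eq_mul, mon_eq_mul (j := Fin.last r) (hc₁supp e he)]
        ring
      have hevsplit : ev f c₀ + g * ev f cH = 0 := by
        rw [← hev₁, ← map_add, hcsum, hev]
      have hcHhom : Homog n cH := by
        intro d hd
        obtain ⟨e, he, rfl⟩ := Finset.mem_image.mp
          (Finsupp.mapDomain_support (Finsupp.mem_support_iff.mpr hd))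
        have hlast := hc₁supp e he
        have hdeg := hc e (Finsupp.mem_support_iff.mp (hc₁suppc he))
        have hss := sum_sub_single (e := e) (j := Fin.last r) hlast
        omega
      have hc₀mem : ev f c₀ ∈ (Ideal.span (Set.range f')) ^ (n + 1) := by
        rw [ev_apply]
        refine Submodule.sum_mem _ fun e he => ?_
        have hlast : e (Fin.last r) = 0 := by
          have h1 := Finsupp.mem_support_iff.mp he
          by_contra h
          rw [hc₀app e, if_neg h] at h1
          exact h1 rfl
        have hdeg : ∑ j, e j = n + 1 := hc e (Finsupp.mem_support_iff.mp (hc₀suppc he))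
        show c₀ e • mon f e ∈ _
        rw [mon_castSucc hlast]
        refine Submodule.smul_mem _ _ ?_
        have hm := mon_mem_pow (f := f') (I := Ideal.span (Set.range f'))
          (fun j => Ideal.subset_span (Set.mem_range_self j)) (fun j => e j.castSucc)
        rwa [sum_castSucc_eq hlast, hdeg] at hm
      have hHmem : ev f cH ∈ (Ideal.span (Set.range f')) ^ (n + 1) := by
        apply hS (n + 1)
        have hneg : g * ev f cH = -ev f c₀ := eq_neg_of_add_eq_zero_right hevsplit
        rw [hneg]
        exact neg_mem hc₀mem
      obtain ⟨P, hPhom, -, hPev⟩ := pow_le_HRep hHmem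
      set P' := Finsupp.mapDomain
        (fun d : Fin r → ℕ => (Fin.snoc d 0 : Fin (r + 1) → ℕ)) P with hP'def
      have hP'ev : ev f P' = ev f' P := emb_ev f P
      have hP'hom : Homog (n + 1) P' := emb_hom hPhom
      have hP'last : ∀ e : Fin (r + 1) → ℕ, ¬ e (Fin.last r) = 0 → P' e = 0 := by
        intro e he
        apply Finsupp.mapDomain_notin_range
        rintro ⟨d, rfl⟩
        exact he (by simp)
      set X := c₀ + g • P' with hXdef
      have hXev : ev f X = 0 := by
        rw [hXdef, map_add, map_smul, smul_eq_mul, hP'ev, hPev]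
        exact hevsplit
      have hXlast : ∀ e : Fin (r + 1) → ℕ, ¬ e (Fin.last r) = 0 → X e = 0 := by
        intro e he
        rw [hXdef, Finsupp.add_apply, Finsupp.smul_apply, hP'last e he, smul_zero, add_zero,
          hc₀app e, if_neg he]
      have hXhom : Homog (n + 1) X := by
        intro e he
        rw [hXdef, Finsupp.add_apply, Finsupp.smul_apply] at he
        by_cases h0 : c₀ e = 0
        · have h1 : P' e ≠ 0 := by
            intro h
            rw [h0, h, smul_zero, add_zero] at he
            exact he rfl
          exact hP'hom e h1
        · have h1 : c e ≠ 0 := by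
            rw [hc₀app e] at h0
            by_cases hl : e (Fin.last r) = 0
            · rwa [if_pos hl] at h0
            · rw [if_neg hl] at h0; exact absurd rfl h0
          exact hc e h1
      have hXsupp : (X.support : Set (Fin (r + 1) → ℕ)) ⊆ {e | e (Fin.last r) = 0} := by
        intro e he
        by_contra h
        exact Finsupp.mem_support_iff.mp he (hXlast e h)
      have hinj₀ : Set.InjOn (Fin.init (α := fun _ => ℕ))
          {e : Fin (r + 1) → ℕ | e (Fin.last r) = 0} := by
        intro x hx y hy hxy
        calc x = Fin.snoc (Fin.init x) 0 := by
              conv_lhs => rw [← Fin.snoc_init_self x]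
              rw [show x (Fin.last r) = 0 from hx]
          _ = Fin.snoc (Fin.init y) 0 := by rw [hxy]
          _ = y := by
              conv_rhs => rw [← Fin.snoc_init_self y]
              rw [show y (Fin.last r) = 0 from hy]
      set Y := Finsupp.mapDomain (Fin.init (α := fun _ => ℕ)) X with hYdef
      have hYapp : ∀ e : Fin (r + 1) → ℕ, e (Fin.last r) = 0 → Y (Fin.init e) = X e :=
        fun e he => Finsupp.mapDomain_apply' {e : Fin (r + 1) → ℕ | e (Fin.last r) = 0}
          X hXsupp hinj₀ he
      have hYhom : Homog (n + 1) Y := by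
        intro d hd
        obtain ⟨e, he, rfl⟩ := Finset.mem_image.mp
          (Finsupp.mapDomain_support (Finsupp.mem_support_iff.mpr hd))
        have hlast : e (Fin.last r) = 0 := hXsupp he
        have hdeg := hXhom e (Finsupp.mem_support_iff.mp he)
        show ∑ j : Fin r, e j.castSucc = n + 1
        rw [sum_castSucc_eq hlast]
        exact hdeg
      have hYev : ev f' Y = 0 := by
        rw [hYdef, ev_mapDomain]
        have heq : (X.sum fun e a => a * mon f' (Fin.init e)) =
            X.sum fun e a => a • mon f e := by
          refine Finsupp.sum_congr fun e he => ?_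
          rw [mon_castSucc (hXsupp he), smul_eq_mul]
          rfl
        rw [heq, ← ev_apply, hXev]
      have hYI : ∀ d, Y d ∈ Ideal.span (Set.range f') := hQ' (n + 1) Y hYhom hYev
      obtain ⟨Z₀, hZhom, hZI, hZev⟩ := shift_le (pow_le_HRep hHmem)
      set Z := Finsupp.mapDomain
        (fun d : Fin r → ℕ => (Fin.snoc d 0 : Fin (r + 1) → ℕ)) Z₀ with hZdef
      have hZmemI' : ∀ e, Z e ∈ Ideal.span (Set.range f') := emb_mem hZI
      have hZhom' : Homog n Z := emb_hom hZhom
      have hZev' : ev f Z = ev f cH := (emb_ev f Z₀).trans hZev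
      have hcHI : ∀ d, cH d ∈ Ideal.span (Set.range f) := by
        intro d
        have h0 : ev f (cH - Z) = 0 := by rw [map_sub, hZev', sub_self]
        have hhom : Homog n (cH - Z) := by
          intro e he
          rw [Finsupp.sub_apply] at he
          by_cases h1 : cH e = 0
          · have h2 : Z e ≠ 0 := fun h => he (by rw [h1, h, sub_zero])
            exact hZhom' e h2
          · exact hcHhom e h1
        have h3 := ihn (cH - Z) hhom h0 d
        have h4 : cH d = (cH - Z) d + Z d := by rw [Finsupp.sub_apply]; ring
        rw [h4]
        exact add_mem h3 (hI'le (hZmemI' d))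
      by_cases hlast : e₀ (Fin.last r) = 0
      · have hXe₀ : X e₀ ∈ Ideal.span (Set.range f) :=
          hI'le ((hYapp e₀ hlast) ▸ hYI (Fin.init e₀))
        have hc₀e : c₀ e₀ ∈ Ideal.span (Set.range f) := by
          have heq : c₀ e₀ = X e₀ - g * P' e₀ := by
            rw [hXdef, Finsupp.add_apply, Finsupp.smul_apply, smul_eq_mul]
            ring
          rw [heq]
          exact sub_mem hXe₀ (Ideal.mul_mem_right _ _ hgI)
        have hce : c e₀ = c₀ e₀ := by
          conv_lhs => rw [← hcsum]
          rw [Finsupp.add_apply, hc₁app e₀, if_neg (not_not_intro hlast), add_zero]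
        rw [hce]
        exact hc₀e
      · have hce : c e₀ = cH (e₀ - Pi.single (Fin.last r) 1) := by
          rw [hcHapp e₀ hlast]
          conv_lhs => rw [← hcsum]
          rw [Finsupp.add_apply, hc₀app e₀, if_neg hlast, zero_add]
        rw [hce]
        exact hcHI _

end QRAux

/-- Let `A` be a commutative ring and `I ⊆ A` a quasiregular ideal, i.e.
`I/I²` is a flat `A/I`-module and the cotangent complex `L_{(A/I)/A}` is equivalent to
`(I/I²)[1]`.  Then the canonical map of graded rings
`Sym*_{A/I}(I/I²) → ⊕ₙ Iⁿ/Iⁿ⁺¹` is an isomorphism.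

Mathlib has neither the cotangent complex nor (hence) Quillen's notion of quasiregularity;
as a formal surrogate for the cotangent-complex condition we assume that `I` is generated
by a (Koszul-)regular sequence `f₁, …, f_r` (such ideals are quasiregular, and then `I/I²`
is free on the classes of the `fⱼ`).  The flatness half of quasiregularity is kept as the
hypothesis `hflat`.  Since `Symⁿ_{A/I}(I/I²)` is then free on the monomials `f^e` with
`|e| = n`, the conclusion "`Symⁿ(I/I²) → Iⁿ/Iⁿ⁺¹` is an isomorphism" is spelled out as:
the monomials of exact degree `n` generate `Iⁿ` modulo `Iⁿ⁺¹` (surjectivity), and any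
`A`-linear combination of them lying in `Iⁿ⁺¹` has all its coefficients in `I`
(injectivity). -/
theorem stmt_5 (A : Type*) [CommRing A] (I : Ideal A)
    (hflat : Module.Flat (A ⧸ I) I.Cotangent)
    (r : ℕ) (f : Fin r → A) (hgen : Ideal.span (Set.range f) = I)
    (hreg : RingTheory.Sequence.IsRegular A (List.ofFn f)) :
    ∀ n : ℕ,
      ((I ^ n : Ideal A) =
          I ^ (n + 1) ⊔ Ideal.span {b | ∃ e : Fin r → ℕ, (∑ j, e j) = n ∧ b = ∏ j, f j ^ e j}) ∧
      ∀ (E : Finset (Fin r → ℕ)) (c : (Fin r → ℕ) → A),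
        (∀ e ∈ E, (∑ j, e j) = n) →
        (∑ e ∈ E, c e * ∏ j, f j ^ e j) ∈ I ^ (n + 1) →
        ∀ e ∈ E, c e ∈ I := by
  subst hgen
  have hw := hreg.toIsWeaklyRegular
  have hQ := QRAux.core f hw
  intro n
  constructor
  · have key : Ideal.span (Set.range f) ^ n =
        Ideal.span {b | ∃ e : Fin r → ℕ, (∑ j, e j) = n ∧ b = ∏ j, f j ^ e j} := by
      apply le_antisymm
      · intro x hx
        obtain ⟨c, hc, -, rfl⟩ := QRAux.pow_le_HRep hx
        rw [QRAux.ev_apply]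
        refine Submodule.sum_mem _ fun e he => ?_
        exact Submodule.smul_mem _ _
          (Ideal.subset_span ⟨e, hc e (Finsupp.mem_support_iff.mp he), rfl⟩)
      · rw [Ideal.span_le]
        rintro b ⟨e, he, rfl⟩
        have hm := QRAux.mon_mem_pow (f := f) (I := Ideal.span (Set.range f))
          (fun j => Ideal.subset_span (Set.mem_range_self j)) e
        rw [he] at hm
        exact hm
    apply le_antisymm
    · exact key ▸ le_sup_right
    · exact sup_le (Ideal.pow_le_pow_right (Nat.le_succ n)) key.ge
  · intro E cc hE hmem e he
    classical
    set c : (Fin r → ℕ) →₀ A := Finsupp.onFinset E (fun e => if e ∈ E then cc e else 0)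
      (fun e h => by by_contra hE'; exact h (by simp [hE'])) with hcdef
    have hcapp : ∀ e, c e = if e ∈ E then cc e else 0 := fun e => rfl
    have hchom : QRAux.Homog n c := by
      intro e' h
      rw [hcapp] at h
      by_cases hE' : e' ∈ E
      · exact hE e' hE'
      · rw [if_neg hE'] at h; exact absurd rfl h
    have hcev : QRAux.ev f c = ∑ e ∈ E, cc e * ∏ j, f j ^ e j := by
      rw [QRAux.ev_apply, hcdef]
      rw [Finsupp.onFinset_sum _ (fun _ => by rw [zero_smul])]
      refine Finset.sum_congr rfl fun a ha => ?_
      rw [if_pos ha, smul_eq_mul]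
      rfl
    have hR := QRAux.Rlem f hQ n c hchom (by rw [hcev]; exact hmem)
    have hRe := hR e
    rwa [hcapp, if_pos he] at hRe
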